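/- Let U : ℝ^d × [0,T] → ℝ be C² satisfying −∂ₜU + (1/(2λ))|∇ₓU|² = 0, and let x : [0,T] → ℝ^d solve x'(t) = −(1/λ)∇ₓU(x(t),t). Then for all t ∈ [0,T], x(t) = x(T) + ((T−t)/λ)·∇ₓU(x(T), T). -/

import Mathlib

open Set InnerProductSpace
open scoped RealInnerProductSpace

private theorem constIcc_aux {E : Type*} [NormedAddCommGroup E] [NormedSpace ℝ E]
    {f : ℝ → E} {a b : ℝ} (hab : a ≤ b)
    (hf : ∀ t ∈ Set.Icc a b, HasDerivWithinAt f 0 (Set.Icc a b) t) :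
    ∀ t ∈ Set.Icc a b, f t = f b := by
  have key := constant_of_has_deriv_right_zero
    (fun t ht => (hf t ht).continuousWithinAt)
    (fun t ht => (hf t (Set.mem_Icc_of_Ico ht)).mono_of_mem_nhdsWithin
      (Icc_mem_nhdsGE_of_mem ht))
  intro t ht
  rw [key t ht, key b (Set.right_mem_Icc.2 hab)]

private theorem stmt5_aux {E : Type*} [NormedAddCommGroup E] [InnerProductSpace ℝ E]
    [FiniteDimensional ℝ E] (lam T : ℝ) (hlam : 0 < lam) (hT : 0 ≤ T)
    (U : E → ℝ → ℝ)
    (hU : ContDiff ℝ 2 (fun p : E × ℝ => U p.1 p.2))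
    (hHJ : ∀ (x : E) (t : ℝ),
      -(deriv (U x) t) + (1 / (2 * lam)) * ‖gradient (fun y => U y t) x‖ ^ 2 = 0)
    (x : ℝ → E)
    (hx : ∀ t ∈ Set.Icc (0 : ℝ) T,
      HasDerivAt x ((-(1 / lam)) • gradient (fun y => U y t) (x t)) t) :
    ∀ t ∈ Set.Icc (0 : ℝ) T,
      x t = x T + ((T - t) / lam) • gradient (fun y => U y T) (x T) := by
  classical
  set F : E × ℝ → ℝ := fun p => U p.1 p.2 with hFdef
  have hFd : Differentiable ℝ F := hU.differentiable two_ne_zero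
  have hF1 : ContDiff ℝ 1 (fderiv ℝ F) := hU.fderiv_right (by norm_num)
  have hF1d : Differentiable ℝ (fderiv ℝ F) := hF1.differentiable one_ne_zero
  set b := stdOrthonormalBasis ℝ E with hbdef
  -- partial space derivative
  have fsp : ∀ (z : E) (t : ℝ), HasFDerivAt (fun y => U y t)
      ((fderiv ℝ F (z, t)).comp (ContinuousLinearMap.inl ℝ E ℝ)) z := by
    intro z t
    exact (hFd (z, t)).hasFDerivAt.comp z (hasFDerivAt_prodMk_left (𝕜 := ℝ) z t)
  have ginner : ∀ (z : E) (t : ℝ) (w : E),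
      ⟪gradient (fun y => U y t) z, w⟫_ℝ = fderiv ℝ F (z, t) (w, 0) := by
    intro z t w
    rw [gradient, InnerProductSpace.toDual_symm_apply, (fsp z t).fderiv]
    rfl
  have hHJ' : ∀ (z : E) (t : ℝ), fderiv ℝ F (z, t) ((0 : E), (1 : ℝ))
      = (1 / (2 * lam)) * ‖gradient (fun y => U y t) z‖ ^ 2 := by
    intro z t
    have hc : HasDerivAt (fun s : ℝ => ((z, s) : E × ℝ)) ((0 : E), (1 : ℝ)) t :=
      (hasDerivAt_const t z).prodMk (hasDerivAt_id t)
    have h1 : HasDerivAt (U z) (fderiv ℝ F (z, t) ((0 : E), (1 : ℝ))) t :=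
      (hFd (z, t)).hasFDerivAt.comp_hasDerivAt t hc
    have h2 := hHJ z t
    rw [h1.deriv] at h2
    linarith
  -- second derivative symmetry
  have hsymm : ∀ (p : E × ℝ) (v w : E × ℝ),
      fderiv ℝ (fderiv ℝ F) p v w = fderiv ℝ (fderiv ℝ F) p w v := by
    intro p v w
    exact second_derivative_symmetric (fun y => (hFd y).hasFDerivAt)
      ((hF1d p).hasFDerivAt) v w
  -- derivative of the map y ↦ fderiv F (y,t)
  have hD : ∀ (z : E) (t : ℝ), HasFDerivAt (fun y => fderiv ℝ F (y, t))
      ((fderiv ℝ (fderiv ℝ F) (z, t)).comp (ContinuousLinearMap.inl ℝ E ℝ)) z := by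
    intro z t
    exact (hF1d (z, t)).hasFDerivAt.comp (g := fderiv ℝ F) z (hasFDerivAt_prodMk_left (𝕜 := ℝ) z t)
  -- representation of the gradient in the orthonormal basis
  have grad_repr : ∀ (z : E) (t : ℝ),
      gradient (fun y => U y t) z = ∑ i, (fderiv ℝ F (z, t) (b i, 0)) • b i := by
    intro z t
    apply ext_inner_right ℝ
    intro w
    rw [ginner z t w, sum_inner]
    have hw : ((w, (0 : ℝ)) : E × ℝ) = ∑ i, ⟪b i, w⟫_ℝ • ((b i, (0 : ℝ)) : E × ℝ) := by
      have h1 := b.sum_repr' w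
      apply Prod.ext
      · rw [Prod.fst_sum]; simpa using h1.symm
      · rw [Prod.snd_sum]; simp
    rw [hw, map_sum]
    refine Finset.sum_congr rfl fun i _ => ?_
    rw [map_smul, real_inner_smul_left, smul_eq_mul]
    rw [real_inner_comm]
    ring
  -- key identity from differentiating the HJ equation in space
  have key1 : ∀ (z : E) (t : ℝ) (w : E),
      fderiv ℝ (fderiv ℝ F) (z, t) (w, 0) ((0 : E), (1 : ℝ))
        = (1 / lam) * fderiv ℝ (fderiv ℝ F) (z, t) (w, 0)
            (gradient (fun y => U y t) z, 0) := by
    intro z t w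
    set Φ : E →L[ℝ] E := ∑ i,
      ((ContinuousLinearMap.apply ℝ ℝ (((b i, (0 : ℝ))) : E × ℝ)).comp
        ((fderiv ℝ (fderiv ℝ F) (z, t)).comp (ContinuousLinearMap.inl ℝ E ℝ))).smulRight (b i)
      with hΦdef
    have hgΦ : HasFDerivAt (fun y : E => gradient (fun y' => U y' t) y) Φ z := by
      have hsum : HasFDerivAt (fun y : E => ∑ i, (fderiv ℝ F (y, t) (b i, 0)) • b i) Φ z := by
        rw [hΦdef]
        apply HasFDerivAt.fun_sum
        intro i _
        exact (((ContinuousLinearMap.apply ℝ ℝ (((b i, (0 : ℝ))) : E × ℝ)).hasFDerivAt).comp z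
          (hD z t)).smul_const (b i)
      exact hsum.congr_of_eventuallyEq
        (Filter.Eventually.of_forall fun y => grad_repr y t)
    have hL1 : HasFDerivAt (fun y : E => fderiv ℝ F (y, t) ((0 : E), (1 : ℝ)))
        ((ContinuousLinearMap.apply ℝ ℝ ((((0 : E), (1 : ℝ))) : E × ℝ)).comp
          ((fderiv ℝ (fderiv ℝ F) (z, t)).comp (ContinuousLinearMap.inl ℝ E ℝ))) z :=
      (ContinuousLinearMap.apply ℝ ℝ ((((0 : E), (1 : ℝ))) : E × ℝ)).hasFDerivAt.comp z (hD z t)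
    have hL2 : HasFDerivAt (fun y : E => fderiv ℝ F (y, t) ((0 : E), (1 : ℝ)))
        ((1 / (2 * lam)) • ((fderivInnerCLM ℝ
            (gradient (fun y' => U y' t) z, gradient (fun y' => U y' t) z)).comp (Φ.prod Φ))) z := by
      have h2 : HasFDerivAt (fun y : E =>
            (1 / (2 * lam)) * ⟪gradient (fun y' => U y' t) y, gradient (fun y' => U y' t) y⟫_ℝ)
          ((1 / (2 * lam)) • ((fderivInnerCLM ℝ
            (gradient (fun y' => U y' t) z, gradient (fun y' => U y' t) z)).comp (Φ.prod Φ))) z :=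
        (hgΦ.inner ℝ hgΦ).const_mul _
      apply h2.congr_of_eventuallyEq
      apply Filter.Eventually.of_forall
      intro y
      show fderiv ℝ F (y, t) ((0 : E), (1 : ℝ))
        = 1 / (2 * lam) * ⟪gradient (fun y' => U y' t) y, gradient (fun y' => U y' t) y⟫_ℝ
      rw [hHJ' y t, real_inner_self_eq_norm_sq]
    have heq := hL1.unique hL2
    have hw := congrArg (fun M : E →L[ℝ] ℝ => M w) heq
    simp only [ContinuousLinearMap.coe_comp', Function.comp_apply,
      ContinuousLinearMap.apply_apply, ContinuousLinearMap.inl_apply,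
      ContinuousLinearMap.coe_smul', Pi.smul_apply, fderivInnerCLM_apply,
      ContinuousLinearMap.prod_apply, smul_eq_mul] at hw
    -- hw : B (w,0) (0,1) = (1/(2λ)) * (⟪g z, Φ w⟫ + ⟪Φ w, g z⟫)
    have hS : ⟪gradient (fun y' => U y' t) z, Φ w⟫_ℝ
        = fderiv ℝ (fderiv ℝ F) (z, t) (w, 0) (gradient (fun y' => U y' t) z, 0) := by
      have hgz : ((gradient (fun y' => U y' t) z, (0 : ℝ)) : E × ℝ)
          = ∑ i, ⟪b i, gradient (fun y' => U y' t) z⟫_ℝ • ((b i, (0 : ℝ)) : E × ℝ) := by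
        have h1 := b.sum_repr' (gradient (fun y' => U y' t) z)
        apply Prod.ext
        · rw [Prod.fst_sum]; simpa using h1.symm
        · rw [Prod.snd_sum]; simp
      rw [hgz, map_sum, hΦdef]
      simp only [ContinuousLinearMap.sum_apply, ContinuousLinearMap.smulRight_apply,
        ContinuousLinearMap.coe_comp', Function.comp_apply,
        ContinuousLinearMap.apply_apply, ContinuousLinearMap.inl_apply, inner_sum,
        real_inner_smul_right, map_smul, smul_eq_mul]
      refine Finset.sum_congr rfl fun i _ => ?_
      rw [real_inner_comm]
      ring
    have hS' : ⟪Φ w, gradient (fun y' => U y' t) z⟫_ℝ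
        = fderiv ℝ (fderiv ℝ F) (z, t) (w, 0) (gradient (fun y' => U y' t) z, 0) := by
      rw [← hS, real_inner_comm]
    rw [hw, hS', hS]
    ring
  -- key2 : derivative of gradient along optimal trajectories vanishes
  have key2 : ∀ (z : E) (t : ℝ) (w : E),
      fderiv ℝ (fderiv ℝ F) (z, t)
        (((-(1 / lam)) • gradient (fun y => U y t) z, (1 : ℝ)) : E × ℝ) ((w, (0 : ℝ)) : E × ℝ)
        = 0 := by
    intro z t w
    rw [hsymm]
    have hv : (((-(1 / lam)) • gradient (fun y => U y t) z, (1 : ℝ)) : E × ℝ)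
        = (-(1 / lam)) • ((gradient (fun y => U y t) z, (0 : ℝ)) : E × ℝ)
          + (((0 : E), (1 : ℝ)) : E × ℝ) := by
      simp [Prod.ext_iff]
    rw [hv, map_add, map_smul]
    simp only [ContinuousLinearMap.add_apply, ContinuousLinearMap.coe_smul', Pi.smul_apply,
      smul_eq_mul]
    rw [key1 z t w]
    ring
  -- the function s ↦ fderiv F (x s, s) (w, 0) is constant on [0, T]
  have hq : ∀ w : E, ∀ t ∈ Set.Icc (0 : ℝ) T,
      HasDerivWithinAt (fun s => fderiv ℝ F (x s, s) ((w, (0 : ℝ)) : E × ℝ)) 0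
        (Set.Icc 0 T) t := by
    intro w t ht
    have hc : HasDerivWithinAt (fun s => ((x s, s) : E × ℝ))
        (((-(1 / lam)) • gradient (fun y => U y t) (x t), (1 : ℝ)))
        (Set.Icc 0 T) t :=
      ((hx t ht).hasDerivWithinAt).prodMk (hasDerivWithinAt_id t _)
    have h2 := HasFDerivAt.comp_hasDerivWithinAt
      (l := fderiv ℝ F) (f := fun s : ℝ => ((x s, s) : E × ℝ)) t ((hF1d (x t, t)).hasFDerivAt) hc
    have h3 := HasFDerivAt.comp_hasDerivWithinAt
      (f := fun s : ℝ => fderiv ℝ F (x s, s)) t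
      ((ContinuousLinearMap.apply ℝ ℝ ((w, (0 : ℝ)) : E × ℝ)).hasFDerivAt) h2
    convert h3 using 1
    · rfl
    · rfl
    · rfl
    simp only [ContinuousLinearMap.apply_apply]
    exact (key2 (x t) t w).symm
  have hgc : ∀ t ∈ Set.Icc (0 : ℝ) T,
      gradient (fun y => U y t) (x t) = gradient (fun y => U y T) (x T) := by
    intro t ht
    apply ext_inner_right ℝ
    intro w
    rw [ginner, ginner]
    exact constIcc_aux hT (hq w) t ht
  -- conclude
  intro t ht
  have hy : ∀ s ∈ Set.Icc (0 : ℝ) T,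
      HasDerivWithinAt (fun s => x s + (s / lam) • gradient (fun y => U y T) (x T)) 0
        (Set.Icc 0 T) s := by
    intro s hs
    have h1 : HasDerivWithinAt x ((-(1 / lam)) • gradient (fun y => U y T) (x T))
        (Set.Icc 0 T) s := by
      have h := (hx s hs).hasDerivWithinAt (s := Set.Icc (0 : ℝ) T)
      rwa [hgc s hs] at h
    have h2 : HasDerivWithinAt (fun s : ℝ => (s / lam) • gradient (fun y => U y T) (x T))
        ((1 / lam) • gradient (fun y => U y T) (x T)) (Set.Icc 0 T) s := by
      have h0 : HasDerivWithinAt (fun s : ℝ => s / lam) (1 / lam) (Set.Icc 0 T) s := by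
        simpa using (hasDerivWithinAt_id s (Set.Icc 0 T)).div_const lam
      exact h0.smul_const _
    have h3 := h1.add h2
    convert h3 using 1
    · rfl
    rw [← add_smul]
    simp
  have hconst := constIcc_aux hT hy t ht
  have hxx : x t + (t / lam) • gradient (fun y => U y T) (x T)
      = x T + (T / lam) • gradient (fun y => U y T) (x T) := hconst
  rw [sub_div, sub_smul, ← add_sub_assoc, ← hxx]
  abel

/-- If U is C² and solves the HJ equation −∂ₜU + (1/(2λ))|∇ₓU|² = 0 and
x : [0,T] → ℝ^d solves x'(t) = −(1/λ)∇ₓU(x(t),t), then for all t ∈ [0,T],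
x(t) = x(T) + ((T−t)/λ)·∇ₓU(x(T),T). -/
theorem stmt_5 (d : ℕ) (lam T : ℝ) (hlam : 0 < lam) (hT : 0 ≤ T)
    (U : EuclideanSpace ℝ (Fin d) → ℝ → ℝ)
    (hU : ContDiff ℝ 2 (fun p : EuclideanSpace ℝ (Fin d) × ℝ => U p.1 p.2))
    (hHJ : ∀ (x : EuclideanSpace ℝ (Fin d)) (t : ℝ),
      -(deriv (U x) t) + (1 / (2 * lam)) * ‖gradient (fun y => U y t) x‖ ^ 2 = 0)
    (x : ℝ → EuclideanSpace ℝ (Fin d))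
    (hx : ∀ t ∈ Set.Icc (0 : ℝ) T,
      HasDerivAt x ((-(1 / lam)) • gradient (fun y => U y t) (x t)) t) :
    ∀ t ∈ Set.Icc (0 : ℝ) T,
      x t = x T + ((T - t) / lam) • gradient (fun y => U y T) (x T) := by
  exact stmt5_aux lam T hlam hT U hU hHJ x hx
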